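/- Let J₁ = (f₁,…,f_m) and J₂ = (g₁,…,g_m) be ideals contained in an ideal I of a commutative ring R, with fᵢ − gᵢ ∈ I² for all i, and suppose J₁ ⊆ I is Aluffi torsion-free. Let 𝒵₁, 𝒵₂ ⊆ Rᵐ be the first syzygy modules of (f₁,…,f_m) and (g₁,…,g_m) respectively. Then J₂ ⊆ I is Aluffi torsion-free if and only if 𝒵₁ ∩ Iⁿ·Rᵐ ⊆ 𝒵₂ + Iⁿ⁺¹·Rᵐ for all n ≥ 0. -/

import Mathlib

section Aux
variable {R : Type*} [CommRing R] {m : ℕ}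

lemma span_mul_mem_exists (g : Fin m → R) (K : Ideal R)
    {x : R} (hx : x ∈ Ideal.span (Set.range g) * K) :
    ∃ a : Fin m → R, (∀ i, a i ∈ K) ∧ x = ∑ i, a i * g i := by
  refine Submodule.mul_induction_on hx ?_ ?_
  · intro p hp k hk
    obtain ⟨c, hc⟩ := (Submodule.mem_span_range_iff_exists_fun R).mp hp
    refine ⟨fun i => c i * k, fun i => K.mul_mem_left _ hk, ?_⟩
    rw [← hc, Finset.sum_mul]
    exact Finset.sum_congr rfl (by intros; simp [smul_eq_mul]; ring)
  · rintro x y ⟨a, ha, rfl⟩ ⟨b, hb, rfl⟩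
    exact ⟨fun i => a i + b i, fun i => K.add_mem (ha i) (hb i), by
      rw [← Finset.sum_add_distrib]; exact Finset.sum_congr rfl (by intros; ring)⟩

lemma sum_mem_span_mul (g : Fin m → R) (K : Ideal R)
    (a : Fin m → R) (ha : ∀ i, a i ∈ K) :
    (∑ i, a i * g i) ∈ Ideal.span (Set.range g) * K := by
  refine Ideal.sum_mem _ fun i _ => ?_
  rw [mul_comm (a i) (g i)]
  exact Ideal.mul_mem_mul (Ideal.subset_span (Set.mem_range_self i)) (ha i)

lemma sum_mul_mem_pow (I : Ideal R) {k : ℕ} {a d : Fin m → R}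
    (ha : ∀ i, a i ∈ I ^ k) (hd : ∀ i, d i ∈ I ^ 2) :
    (∑ i, a i * d i) ∈ I ^ (k + 2) := by
  refine Ideal.sum_mem _ fun i _ => ?_
  rw [pow_add]
  exact Ideal.mul_mem_mul (ha i) (hd i)

end Aux

/-- Syzygy comparison theorem: with `fᵢ − gᵢ ∈ I²` and `J₁ = (f) ⊆ I` Aluffi torsion-free,
`J₂ = (g) ⊆ I` is Aluffi torsion-free iff `𝒵₁ ∩ Iⁿ·Rᵐ ⊆ 𝒵₂ + Iⁿ⁺¹·Rᵐ` for all `n ≥ 0`. -/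
theorem syzygy_comparison {R : Type*} [CommRing R] {m : ℕ} (f g : Fin m → R)
    (I : Ideal R) (J₁ J₂ : Ideal R)
    (hJ₁ : J₁ = Ideal.span (Set.range f)) (hJ₂ : J₂ = Ideal.span (Set.range g))
    (h₁I : J₁ ≤ I) (h₂I : J₂ ≤ I)
    (hdiff : ∀ i, f i - g i ∈ I ^ 2)
    (hatf₁ : ∀ n : ℕ, 1 ≤ n → J₁ ⊓ I ^ n = J₁ * I ^ (n - 1)) :
    (∀ n : ℕ, 1 ≤ n → J₂ ⊓ I ^ n = J₂ * I ^ (n - 1)) ↔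
      (∀ n : ℕ, ∀ a : Fin m → R, (∑ i, a i * f i = 0) → (∀ i, a i ∈ I ^ n) →
        ∃ b : Fin m → R, (∀ i, b i ∈ I ^ (n + 1)) ∧ ∑ i, (a i - b i) * g i = 0) := by
  constructor
  · -- ATF₂ ⇒ syzygy condition
    intro hatf₂ n a hsyz ha
    have hg : (∑ i, a i * g i) ∈ J₂ ⊓ I ^ (n + 2) := by
      constructor
      · rw [hJ₂]
        exact Ideal.sum_mem _ fun i _ =>
          Ideal.mul_mem_left _ _ (Ideal.subset_span (Set.mem_range_self i))
      · have h : (∑ i, a i * g i) = (∑ i, a i * f i) - ∑ i, a i * (f i - g i) := by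
          rw [← Finset.sum_sub_distrib]
          exact Finset.sum_congr rfl (by intros; ring)
        rw [h, hsyz, zero_sub]
        exact neg_mem (sum_mul_mem_pow I ha hdiff)
    rw [hatf₂ (n + 2) (by omega)] at hg
    have h21 : n + 2 - 1 = n + 1 := by omega
    rw [h21, hJ₂] at hg
    obtain ⟨b, hb, hbe⟩ := span_mul_mem_exists g (I ^ (n + 1)) hg
    refine ⟨b, hb, ?_⟩
    have : ∑ i, (a i - b i) * g i = (∑ i, a i * g i) - (∑ i, b i * g i) := by
      rw [← Finset.sum_sub_distrib]
      exact Finset.sum_congr rfl (by intros; ring)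
    rw [this, ← hbe, sub_self]
  · -- syzygy condition ⇒ ATF₂
    intro hcond
    have key : ∀ n : ℕ, J₂ ⊓ I ^ (n + 1) = J₂ * I ^ n := by
      intro n
      induction n with
      | zero => simp [inf_eq_left.mpr h₂I]
      | succ n ih =>
        apply le_antisymm
        · intro x hx
          obtain ⟨hxJ, hxI⟩ := hx
          have hx' : x ∈ J₂ ⊓ I ^ (n + 1) :=
            ⟨hxJ, Ideal.pow_le_pow_right (by omega) hxI⟩
          rw [ih, hJ₂] at hx'
          obtain ⟨a, ha, rfl⟩ := span_mul_mem_exists g (I ^ n) hx'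
          -- Σ aᵢ fᵢ ∈ J₁ ⊓ I^(n+2)
          have hf : (∑ i, a i * f i) ∈ J₁ ⊓ I ^ (n + 2) := by
            constructor
            · rw [hJ₁]
              exact Ideal.sum_mem _ fun i _ =>
                Ideal.mul_mem_left _ _ (Ideal.subset_span (Set.mem_range_self i))
            · have : (∑ i, a i * f i) = (∑ i, a i * g i) + ∑ i, a i * (f i - g i) := by
                rw [← Finset.sum_add_distrib]
                exact Finset.sum_congr rfl (by intros; ring)
              rw [this]
              exact add_mem hxI (sum_mul_mem_pow I ha hdiff)
          rw [hatf₁ (n + 2) (by omega), show n + 2 - 1 = n + 1 from by omega, hJ₁] at hf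
          obtain ⟨c, hc, hce⟩ := span_mul_mem_exists f (I ^ (n + 1)) hf
          have hsyz : ∑ i, (a i - c i) * f i = 0 := by
            have : ∑ i, (a i - c i) * f i = (∑ i, a i * f i) - (∑ i, c i * f i) := by
              rw [← Finset.sum_sub_distrib]
              exact Finset.sum_congr rfl (by intros; ring)
            rw [this, ← hce, sub_self]
          have hac : ∀ i, a i - c i ∈ I ^ n := fun i =>
            sub_mem (ha i) (Ideal.pow_le_pow_right (by omega) (hc i))
          obtain ⟨b, hb, hbe⟩ := hcond n (fun i => a i - c i) hsyz hac
          have : (∑ i, a i * g i) = ∑ i, (c i + b i) * g i := by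
            rw [← sub_eq_zero, ← Finset.sum_sub_distrib, ← hbe]
            exact Finset.sum_congr rfl (by intros; ring)
          rw [this, hJ₂]
          exact sum_mem_span_mul g (I ^ (n + 1)) _ fun i =>
            add_mem (hc i) (hb i)
        · refine le_inf Ideal.mul_le_left ?_
          calc J₂ * I ^ (n + 1) ≤ I * I ^ (n + 1) := Ideal.mul_mono h₂I le_rfl
            _ = I ^ (n + 2) := by ring
    intro n hn
    have := key (n - 1)
    rwa [show n - 1 + 1 = n from by omega] at this
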